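/- Merge-operator correctness: Let A and B be distinct attributes, let I and J be finite sets of values, let {E_a}_{a∈I} be relations over a schema S_E and {F_b}_{b∈J} relations over a schema S_F, where {A}, {B}, S_E, S_F are pairwise disjoint. Then the selection σ_{A=B} applied to the relation denoted by (⋃_{a∈I} ⟨A:a⟩ × E_a) × (⋃_{b∈J} ⟨B:b⟩ × F_b) equals the relation denoted by ⋃_{c ∈ I∩J} ⟨A:c⟩ × ⟨B:c⟩ × E_c × F_c. -/
import Mathlib


/-! ## Tuples and relations -/

/-- Attributes. -/
abbrev Att : Type := ℕ
/-- Values (a countable domain). -/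
abbrev Val : Type := ℕ

/-- A tuple is a partial map from attributes to values; it is a tuple over a
schema `S` if it is defined exactly on the attributes of `S`. -/
abbrev Tuple : Type := Att → Option Val

namespace Tuple

/-- `t` is a tuple over the schema `S`. -/
def isOver (t : Tuple) (S : Finset Att) : Prop := ∀ a, (t a).isSome ↔ a ∈ S

/-- Restriction of a tuple to a set of attributes. -/
def restrict (t : Tuple) (P : Finset Att) : Tuple :=
  fun a => if a ∈ P then t a else none

/-- Combination of two tuples (used for products/joins over disjoint schemas). -/
def join (t₁ t₂ : Tuple) : Tuple :=
  fun a => match t₁ a with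
    | some v => some v
    | none => t₂ a

end Tuple

/-- The nullary tuple `⟨⟩`. -/
def emptyTuple : Tuple := fun _ => none

/-- The tuple of the singleton relation `⟨A : a⟩`. -/
def singleTuple (A : Att) (a : Val) : Tuple := fun b => if b = A then some a else none

/-- Projection `π_P` of a relation. -/
def projRel (P : Finset Att) (R : Set Tuple) : Set Tuple := (fun t => t.restrict P) '' R

/-- Product of two relations (over disjoint schemas). -/
def prodRel (R₁ R₂ : Set Tuple) : Set Tuple := Set.image2 Tuple.join R₁ R₂

/-- `R` is a (finite) relation over schema `S`. -/
def IsRelOver (R : Set Tuple) (S : Finset Att) : Prop := R.Finite ∧ ∀ t ∈ R, t.isOver S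

/-! ## F-representations -/

/-- Factorised representations: expressions built from the empty relation,
the nullary tuple, singletons, unions and products. -/
inductive FRep : Type where
  | empty (S : Finset Att) : FRep
  | nullary : FRep
  | single (A : Att) (a : Val) : FRep
  | union (E₁ E₂ : FRep) : FRep
  | prod (E₁ E₂ : FRep) : FRep

namespace FRep

/-- The schema of an f-representation. -/
def schema : FRep → Finset Att
  | empty S => S
  | nullary => ∅
  | single A _ => {A}
  | union E₁ _ => E₁.schema
  | prod E₁ E₂ => E₁.schema ∪ E₂.schema

/-- Well-formedness: unions are over a common schema, products over disjoint schemas. -/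
def WF : FRep → Prop
  | empty _ => True
  | nullary => True
  | single _ _ => True
  | union E₁ E₂ => E₁.WF ∧ E₂.WF ∧ E₁.schema = E₂.schema
  | prod E₁ E₂ => E₁.WF ∧ E₂.WF ∧ Disjoint E₁.schema E₂.schema

/-- The relation `⟦E⟧` denoted by an f-representation `E`. -/
def denote : FRep → Set Tuple
  | empty _ => ∅
  | nullary => {emptyTuple}
  | single A a => {singleTuple A a}
  | union E₁ E₂ => E₁.denote ∪ E₂.denote
  | prod E₁ E₂ => prodRel E₁.denote E₂.denote

/-- The size `|E|`: the number of singletons in `E`. -/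
def size : FRep → ℕ
  | empty _ => 0
  | nullary => 0
  | single _ _ => 1
  | union E₁ E₂ => E₁.size + E₂.size
  | prod E₁ E₂ => E₁.size + E₂.size

/-- Number of `A`-singletons occurring in `E`. -/
def countAtt (A : Att) : FRep → ℕ
  | empty _ => 0
  | nullary => 0
  | single B _ => if B = A then 1 else 0
  | union E₁ E₂ => countAtt A E₁ + countAtt A E₂
  | prod E₁ E₂ => countAtt A E₁ + countAtt A E₂

end FRep

/-! ## F-trees -/

/-- An f-tree: a rooted tree whose nodes are labelled by sets of attributes.
A forest (`List FTree`) of such trees is an f-tree in the sense of the paper. -/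
inductive FTree : Type where
  | node (label : Finset Att) (children : List FTree) : FTree

/-- An f-tree over a schema is an unordered rooted forest. -/
abbrev Forest := List FTree

def FTree.label : FTree → Finset Att
  | .node l _ => l

def FTree.children : FTree → List FTree
  | .node _ cs => cs

/-- The list of node labels of a tree. -/
def FTree.nodes : FTree → List (Finset Att)
  | .node l cs => l :: (cs.attach.map (fun c => FTree.nodes c.1)).flatten
decreasing_by
  have := List.sizeOf_lt_of_mem c.2
  simp only [FTree.node.sizeOf_spec]
  omega

/-- The list of node labels of a forest. -/
def forestNodes (F : Forest) : List (Finset Att) := (F.map FTree.nodes).flatten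

/-- All attributes appearing in a tree. -/
def FTree.attrs (t : FTree) : Finset Att := t.nodes.foldr (· ∪ ·) ∅

/-- The root-to-leaf paths of a tree, as lists of labels. -/
def FTree.paths : FTree → List (List (Finset Att))
  | .node l cs =>
    match (cs.attach.map (fun c => FTree.paths c.1)).flatten with
    | [] => [[l]]
    | ps => ps.map (l :: ·)
decreasing_by
  have := List.sizeOf_lt_of_mem c.2
  simp only [FTree.node.sizeOf_spec]
  omega

/-- The root-to-leaf paths of a forest. -/
def forestPaths (F : Forest) : List (List (Finset Att)) := (F.map FTree.paths).flatten

/-- `F` is an f-tree over the schema `S`: labels are nonempty, pairwise disjoint,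
and cover exactly `S`. -/
def IsFTreeOver (S : Finset Att) (F : Forest) : Prop :=
  (∀ l ∈ forestNodes F, l.Nonempty) ∧
  (forestNodes F).Pairwise (fun l₁ l₂ => Disjoint l₁ l₂) ∧
  (∀ a : Att, a ∈ S ↔ ∃ l ∈ forestNodes F, a ∈ l)

/-! ## F-representations over f-trees -/

mutual
  /-- `OverForest E F`: `E` is an f-representation over the forest `F`
  (a product of f-representations over the trees of `F`; over the empty forest
  it is `∅` or `⟨⟩`). -/
  inductive OverForest : FRep → Forest → Prop where
    | empty : OverForest (.empty ∅) []
    | nullary : OverForest .nullary []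
    | one {E : FRep} {t : FTree} : OverTree E t → OverForest E [t]
    | cons {E F : FRep} {t : FTree} {ts : Forest} :
        OverTree E t → OverForest F ts → ts ≠ [] → OverForest (.prod E F) (t :: ts)

  /-- `OverTree E t`: `E` is an f-representation over the tree `t`. -/
  inductive OverTree : FRep → FTree → Prop where
    | mk {E : FRep} {l : Finset Att} {cs : List FTree} {vs : Set Val} :
        OverUnion E l cs vs → OverTree E (.node l cs)

  /-- `OverUnion E l cs vs`: `E` is a union, over the distinct values in `vs`,
  of groups `⟨A₁:a⟩ × ⋯ × ⟨A_k:a⟩ × E_a` for the node labelled `l` with child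
  forest `cs`. -/
  inductive OverUnion : FRep → Finset Att → List FTree → Set Val → Prop where
    | empty {l : Finset Att} {cs : List FTree} :
        OverUnion (.empty ((FTree.node l cs).attrs)) l cs ∅
    | group {E : FRep} {l : Finset Att} {cs : List FTree} {a : Val} :
        OverGroup E l cs a → OverUnion E l cs {a}
    | union {E₁ E₂ : FRep} {l : Finset Att} {cs : List FTree} {vs₁ vs₂ : Set Val} :
        OverUnion E₁ l cs vs₁ → OverUnion E₂ l cs vs₂ → Disjoint vs₁ vs₂ →
        OverUnion (.union E₁ E₂) l cs (vs₁ ∪ vs₂)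

  /-- `OverGroup E l cs a`: `E` is `⟨A₁:a⟩ × ⋯ × ⟨A_k:a⟩ × E_a` where
  `{A₁,…,A_k} = l` and `E_a` is over the child forest `cs` (omitted when `cs` is empty). -/
  inductive OverGroup : FRep → Finset Att → List FTree → Val → Prop where
    | leaf {E : FRep} {l : Finset Att} {a : Val} :
        SingProd E l a → OverGroup E l [] a
    | inner {E F : FRep} {l : Finset Att} {cs : List FTree} {a : Val} :
        SingProd E l a → OverForest F cs → cs ≠ [] → OverGroup (.prod E F) l cs a

  /-- `SingProd E l a`: `E` is the product of singletons `⟨A:a⟩` for the attributes `A ∈ l`. -/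
  inductive SingProd : FRep → Finset Att → Val → Prop where
    | single {A : Att} {a : Val} : SingProd (.single A a) {A} a
    | prod {E₁ E₂ : FRep} {l₁ l₂ : Finset Att} {a : Val} :
        SingProd E₁ l₁ a → SingProd E₂ l₂ a → Disjoint l₁ l₂ →
        SingProd (.prod E₁ E₂) (l₁ ∪ l₂) a
end

/-- `R` admits an f-representation over the f-tree (forest) `F`. -/
def HasFRepOver (R : Set Tuple) (F : Forest) : Prop :=
  ∃ E : FRep, OverForest E F ∧ E.denote = R

/-! ## Queries -/

/-- A select-project-join query `Q = π_P σ_φ (R₁ × ⋯ × R_n)`: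
`n` relation symbols with given schemas, a conjunction `eqs` of attribute
equalities, and a projection list `proj`. -/
structure Query where
  n : ℕ
  schemas : Fin n → Finset Att
  eqs : List (Att × Att)
  proj : Finset Att

namespace Query

/-- All attributes of the query. -/
def atts (Q : Query) : Finset Att := Finset.univ.biUnion Q.schemas

/-- Well-formedness: relation schemas are pairwise disjoint, and the projection
list and equalities mention only attributes of the query. -/
def WF (Q : Query) : Prop :=
  (∀ i j : Fin Q.n, i ≠ j → Disjoint (Q.schemas i) (Q.schemas j)) ∧
  Q.proj ⊆ Q.atts ∧ ∀ p ∈ Q.eqs, p.1 ∈ Q.atts ∧ p.2 ∈ Q.atts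

/-- A database for `Q` assigns a finite relation of the right schema to each
relation symbol. -/
def IsDB (Q : Query) (D : Fin Q.n → Set Tuple) : Prop :=
  ∀ i, (D i).Finite ∧ ∀ t ∈ D i, t.isOver (Q.schemas i)

/-- The query result `Q(D)`. -/
def result (Q : Query) (D : Fin Q.n → Set Tuple) : Set Tuple :=
  { t | ∃ f : Tuple, f.isOver Q.atts ∧ (∀ i, f.restrict (Q.schemas i) ∈ D i) ∧
      (∀ p ∈ Q.eqs, f p.1 = f p.2) ∧ t = f.restrict Q.proj }

/-- Attributes transitively equal under the equalities of `φ`. -/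
def equivAtt (Q : Query) : Att → Att → Prop :=
  Relation.EqvGen (fun a b => (a, b) ∈ Q.eqs ∨ (b, a) ∈ Q.eqs)

open scoped Classical in
/-- The equivalence class of an attribute. -/
noncomputable def cls (Q : Query) (a : Att) : Finset Att :=
  Q.atts.filter (fun b => Q.equivAtt a b)

/-- `F` is an f-tree of the query `Q`: its nodes are labelled exactly by the
equivalence classes of the attributes in the projection list, one node per class. -/
def IsFTreeOf (Q : Query) (F : Forest) : Prop :=
  (forestNodes F).Nodup ∧
  ∀ l : Finset Att, l ∈ forestNodes F ↔ ∃ a ∈ Q.proj, l = Q.cls a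

/-- The path constraint: for each relation of `Q`, all nodes labelled by classes
containing its attributes lie on a single root-to-leaf path. -/
def PathConstraint (Q : Query) (F : Forest) : Prop :=
  ∀ i : Fin Q.n, ∃ p ∈ forestPaths F, ∀ l ∈ forestNodes F,
    (l ∩ Q.schemas i).Nonempty → l ∈ p

/-- A fractional edge cover of the classes on a path `p` by the relations of `Q`. -/
def IsFracCover (Q : Query) (p : List (Finset Att)) (x : Fin Q.n → ℝ) : Prop :=
  (∀ i, 0 ≤ x i) ∧
  ∀ l ∈ p, 1 ≤ ∑ i, (if (l ∩ Q.schemas i).Nonempty then x i else 0)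

/-- The fractional edge cover number `ρ*(p)` of a path `p`. -/
noncomputable def rhoStar (Q : Query) (p : List (Finset Att)) : ℝ :=
  sInf { c : ℝ | ∃ x, Q.IsFracCover p x ∧ c = ∑ i, x i }

/-- The parameter `s(T)`: the maximum of `ρ*(p)` over all root-to-leaf paths of `F`. -/
noncomputable def sParam (Q : Query) (F : Forest) : ℝ :=
  sSup { r : ℝ | ∃ p ∈ forestPaths F, r = Q.rhoStar p }

/-- The size `|D|` of a database: the total number of tuples. -/
noncomputable def dbSize (Q : Query) (D : Fin Q.n → Set Tuple) : ℕ :=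
  ∑ i, (D i).ncard

end Query


lemma join_assoc (x y z : Tuple) :
    Tuple.join (Tuple.join x y) z = Tuple.join x (Tuple.join y z) := by
  funext a; simp only [Tuple.join]; cases x a <;> simp

lemma join_single_comm (B : Att) (b : Val) (e : Tuple) (he : e B = none) :
    Tuple.join e (singleTuple B b) = Tuple.join (singleTuple B b) e := by
  funext a
  by_cases h : a = B
  · subst h; simp [Tuple.join, singleTuple, he]
  · simp only [Tuple.join, singleTuple, if_neg h]
    cases e a <;> simp

/-- **merge-operator correctness.** The selection `σ_{A=B}` of
`(⋃_{a∈I} ⟨A:a⟩ × E_a) × (⋃_{b∈J} ⟨B:b⟩ × F_b)` equals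
`⋃_{c∈I∩J} ⟨A:c⟩ × ⟨B:c⟩ × E_c × F_c`. -/
theorem merge_correct (A B : Att) (hAB : A ≠ B) (I J : Finset Val)
    (SE SF : Finset Att) (E F : Val → Set Tuple)
    (hASE : A ∉ SE) (hASF : A ∉ SF) (hBSE : B ∉ SE) (hBSF : B ∉ SF)
    (hSEF : Disjoint SE SF)
    (hE : ∀ a ∈ I, IsRelOver (E a) SE) (hF : ∀ b ∈ J, IsRelOver (F b) SF) :
    {t ∈ prodRel (⋃ a ∈ I, prodRel {singleTuple A a} (E a))
                 (⋃ b ∈ J, prodRel {singleTuple B b} (F b)) | t A = t B}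
      = ⋃ c ∈ (I ∩ J : Finset Val),
          prodRel {singleTuple A c}
            (prodRel {singleTuple B c} (prodRel (E c) (F c))) := by
  have heB : ∀ a ∈ I, ∀ e ∈ E a, e B = none := by
    intro a ha e he
    have := ((hE a ha).2 e he) B
    simp [hBSE] at this
    exact this
  ext t
  simp only [Set.mem_setOf_eq, prodRel, Set.mem_image2, Set.mem_iUnion,
    Set.mem_singleton_iff, exists_prop, Finset.mem_inter]
  constructor
  · rintro ⟨⟨x, ⟨a, ha, x1, hx1, e, he, hx⟩, y, ⟨b, hb, y1, hy1, f, hf, hy⟩, ht⟩, hAB'⟩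
    subst hx1 hy1 hx hy ht
    have hA : Tuple.join (Tuple.join (singleTuple A a) e)
        (Tuple.join (singleTuple B b) f) A = some a := by
      simp [Tuple.join, singleTuple]
    have heBn := heB a ha e he
    have hB : Tuple.join (Tuple.join (singleTuple A a) e)
        (Tuple.join (singleTuple B b) f) B = some b := by
      simp [Tuple.join, singleTuple, hAB, heBn, Ne.symm hAB]
    rw [hA, hB] at hAB'
    injection hAB' with hab
    subst hab
    refine ⟨a, ⟨ha, hb⟩, singleTuple A a, rfl, _, ⟨singleTuple B a, rfl,
      Tuple.join e f, ⟨e, he, f, hf, rfl⟩, rfl⟩, ?_⟩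
    rw [join_assoc, ← join_assoc e, join_single_comm B a e heBn, join_assoc]
  · rintro ⟨c, ⟨hcI, hcJ⟩, x, hx, y, ⟨y1, hy1, z, ⟨e, he, f, hf, hz⟩, hy⟩, ht⟩
    subst hx hy1 hz hy ht
    have heBn := heB c hcI e he
    have key : Tuple.join (singleTuple A c)
        (Tuple.join (singleTuple B c) (Tuple.join e f))
        = Tuple.join (Tuple.join (singleTuple A c) e)
          (Tuple.join (singleTuple B c) f) := by
      rw [join_assoc, ← join_assoc e, join_single_comm B c e heBn, join_assoc]
    refine ⟨⟨_, ⟨c, hcI, singleTuple A c, rfl, e, he, rfl⟩,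
      _, ⟨c, hcJ, singleTuple B c, rfl, f, hf, rfl⟩, key.symm⟩, ?_⟩
    rw [key]
    have hA : Tuple.join (Tuple.join (singleTuple A c) e)
        (Tuple.join (singleTuple B c) f) A = some c := by
      simp [Tuple.join, singleTuple]
    have hB : Tuple.join (Tuple.join (singleTuple A c) e)
        (Tuple.join (singleTuple B c) f) B = some c := by
      simp [Tuple.join, singleTuple, hAB, heBn, Ne.symm hAB]
    rw [hA, hB]
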